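/- Let Γ = Cay(Z_{2m}, S) satisfy the hypotheses of Lemma 'hmmtype1' with a subgroup H of odd order: i.e., there exist nontrivial subgroups H, K of Z_{2m}, |K| even, K_o = K \ 2K, |H| odd, and either S + H ⊆ S ∪ (K_o + H) with H ∩ K_o = ∅, or (S \ K_o) + H ⊆ S ∪ K_o. Then, setting L = K + H and L_o = L \ 2L, one has (S \ L_o) + H = S \ L_o. -/
import Mathlib



open SimpleGraph Pointwise

/-- `2K = {2k : k ∈ K}` for a subgroup `K`. -/
def twoMul {n : ℕ} (K : AddSubgroup (ZMod n)) : Set (ZMod n) :=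
  (fun k => 2 * k) '' (K : Set (ZMod n))

/-- `K_o = K \ 2K`. -/
def oddPart {n : ℕ} (K : AddSubgroup (ZMod n)) : Set (ZMod n) :=
  (K : Set (ZMod n)) \ twoMul K

/-- In a subgroup of odd cardinality, doubling is surjective. -/
lemma double_surj {n : ℕ} (P : AddSubgroup (ZMod n)) (hodd : Odd (Nat.card P)) :
    ∀ g ∈ P, ∃ c ∈ P, 2 * c = g := by
  intro g hg
  obtain ⟨k, hk⟩ := hodd
  refine ⟨(k + 1) • g, AddSubgroup.nsmul_mem P hg _, ?_⟩
  have hcard : (Nat.card P) • (⟨g, hg⟩ : P) = 0 := card_nsmul_eq_zero'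
  have hcard' : (Nat.card P) • g = 0 := by
    have := congrArg (Subtype.val) hcard
    push_cast at this
    exact this
  have : (2 * (k + 1)) • g = g := by
    have h2 : 2 * (k + 1) = Nat.card P + 1 := by omega
    rw [h2, add_nsmul, hcard', one_nsmul, zero_add]
  calc 2 * ((k + 1) • g) = (2 * (k + 1)) • g := by rw [mul_nsmul]; simp [two_nsmul, two_mul]
    _ = g := this

theorem stmt18 (m : ℕ) (hm : 0 < m) (S : Set (ZMod (2 * m)))
    (hS : ∀ s ∈ S, -s ∈ S) (h0 : (0 : ZMod (2 * m)) ∉ S)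
    (H K : AddSubgroup (ZMod (2 * m))) (hHnt : H ≠ ⊥) (hKnt : K ≠ ⊥)
    (hKeven : Even (Nat.card K)) (hHodd : Odd (Nat.card H))
    (hcond :
      (S + (H : Set (ZMod (2 * m))) ⊆ S ∪ (oddPart K + (H : Set (ZMod (2 * m)))) ∧
        (H : Set (ZMod (2 * m))) ∩ oddPart K = ∅) ∨
      ((S \ oddPart K) + (H : Set (ZMod (2 * m))) ⊆ S ∪ oddPart K)) :
    (S \ oddPart (K ⊔ H)) + (H : Set (ZMod (2 * m))) = S \ oddPart (K ⊔ H) := by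
  set L := K ⊔ H with hL
  -- K ⊓ H has odd cardinality
  have hKHodd : Odd (Nat.card (K ⊓ H : AddSubgroup (ZMod (2 * m)))) := by
    have hdvd : Nat.card (K ⊓ H : AddSubgroup (ZMod (2 * m))) ∣ Nat.card H :=
      AddSubgroup.card_dvd_of_le inf_le_right
    rcases hdvd with ⟨c, hc⟩
    rw [hc, Nat.odd_mul] at hHodd
    exact hHodd.1
  -- Fact A : adding h ∈ H preserves membership / nonmembership in oddPart L
  have factA : ∀ (x : ZMod (2 * m)) (h : ZMod (2 * m)), h ∈ H →
      (x + h ∈ oddPart L ↔ x ∈ oddPart L) := by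
    intro x h hh
    obtain ⟨c, hcH, hc2⟩ := double_surj H hHodd h hh
    have hhL : h ∈ L := AddSubgroup.mem_sup_right hh
    have hcL : c ∈ L := AddSubgroup.mem_sup_right hcH
    constructor
    · rintro ⟨hmem, hnot⟩
      refine ⟨?_, ?_⟩
      · have := AddSubgroup.sub_mem L hmem hhL
        simpa using this
      · rintro ⟨y, hyL, hy2⟩
        have hy2' : 2 * y = x := hy2
        apply hnot
        exact ⟨y + c, AddSubgroup.add_mem L hyL hcL, show 2 * (y + c) = x + h by
          linear_combination hy2' + hc2⟩
    · rintro ⟨hmem, hnot⟩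
      refine ⟨AddSubgroup.add_mem L hmem hhL, ?_⟩
      rintro ⟨y, hyL, hy2⟩
      have hy2' : 2 * y = x + h := hy2
      apply hnot
      exact ⟨y - c, AddSubgroup.sub_mem L hyL hcL, show 2 * (y - c) = x by
        linear_combination hy2' - hc2⟩
  -- Fact B : oddPart K + H ⊆ oddPart L
  have factB : ∀ k ∈ oddPart K, ∀ h ∈ (H : Set (ZMod (2 * m))), k + h ∈ oddPart L := by
    rintro k ⟨hkK, hknot⟩ h hh
    refine ⟨AddSubgroup.add_mem L (AddSubgroup.mem_sup_left hkK) (AddSubgroup.mem_sup_right hh), ?_⟩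
    rintro ⟨y, hyL, hy2⟩
    obtain ⟨a, haK, b, hbH, hab⟩ := AddSubgroup.mem_sup.mp hyL
    -- k + h = 2a + 2b, so k - 2a = 2b - h ∈ K ⊓ H
    have hy2' : 2 * y = k + h := hy2
    have hkey : k - 2 * a = 2 * b - h := by
      linear_combination (-1 : ZMod (2*m)) * hy2' - 2 * hab
    have hgK : k - 2 * a ∈ K := K.sub_mem hkK (by
      have : 2 * a = a + a := by ring
      rw [this]; exact K.add_mem haK haK)
    have hgH : k - 2 * a ∈ H := by
      rw [hkey]
      exact H.sub_mem (by
        have : 2 * b = b + b := by ring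
        rw [this]; exact H.add_mem hbH hbH) hh
    obtain ⟨c, hcKH, hc2⟩ := double_surj (K ⊓ H) hKHodd (k - 2 * a)
      (AddSubgroup.mem_inf.mpr ⟨hgK, hgH⟩)
    apply hknot
    exact ⟨a + c, K.add_mem haK (AddSubgroup.mem_inf.mp hcKH).1, show 2 * (a + c) = k by
      linear_combination hc2⟩
  -- oddPart K ⊆ oddPart L
  have hKoL : oddPart K ⊆ oddPart L := by
    intro k hk
    have := factB k hk 0 (AddSubgroup.zero_mem H)
    simpa using this
  apply Set.Subset.antisymm
  · rintro x ⟨s, ⟨hsS, hsL⟩, h, hh, rfl⟩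
    have hnotL : s + h ∉ oddPart L := fun hc => hsL ((factA s h hh).mp hc)
    refine ⟨?_, hnotL⟩
    rcases hcond with ⟨h1, _⟩ | h2
    · have : s + h ∈ S ∪ (oddPart K + (H : Set (ZMod (2 * m)))) :=
        h1 ⟨s, hsS, h, hh, rfl⟩
      rcases this with hin | hin
      · exact hin
      · exfalso
        obtain ⟨k, hk, h', hh', hkh⟩ := hin
        exact hnotL (hkh ▸ factB k hk h' hh')
    · have hsKo : s ∉ oddPart K := fun hc => hsL (hKoL hc)
      have : s + h ∈ S ∪ oddPart K := h2 ⟨s, ⟨hsS, hsKo⟩, h, hh, rfl⟩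
      rcases this with hin | hin
      · exact hin
      · exact absurd (hKoL hin) hnotL
  · intro x hx
    exact ⟨x, hx, 0, AddSubgroup.zero_mem H, by simp⟩
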